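/- Let (X, Σ, μ) be a σ-finite measure space, 1 ≤ p ≤ ∞, and h ∈ L^∞(μ). Let M_h : L^p(μ) → L^p(μ) be the multiplication operator M_h(f) = h·f, which is a bounded linear operator. Then M_h is a topological divisor of zero in the Banach algebra B(L^p(μ)) of bounded linear operators on L^p(μ) if and only if h is a topological divisor of zero in L^∞(μ). -/

import Mathlib

open MeasureTheory Filter ENNReal

/-- `x` is a topological divisor of zero in a normed ring: there is a sequence of
norm-one elements whose products with `x` (on one side) tend to zero in norm. -/
def IsTDZ {A : Type*} [NormedRing A] (x : A) : Prop :=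
  ∃ y : ℕ → A, (∀ n, ‖y n‖ = 1) ∧
    (Tendsto (fun n => ‖x * y n‖) atTop (nhds 0) ∨
      Tendsto (fun n => ‖y n * x‖) atTop (nhds 0))

/-- `h` is a topological divisor of zero in the (commutative) Banach algebra `L^∞(μ)`. -/
def IsTDZLinfty {X : Type*} [MeasurableSpace X] (μ : Measure X) (h : Lp ℂ ⊤ μ) : Prop :=
  ∃ g : ℕ → Lp ℂ ⊤ μ, (∀ n, ‖g n‖ = 1) ∧
    (Tendsto (fun n => (eLpNorm (⇑h * ⇑(g n) : X → ℂ) ⊤ μ).toReal) atTop (nhds 0) ∨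
      Tendsto (fun n => (eLpNorm (⇑(g n) * ⇑h : X → ℂ) ⊤ μ).toReal) atTop (nhds 0))


open MeasureTheory Filter ENNReal Set

namespace TDZAux

variable {X : Type*} [MeasurableSpace X] {μ : Measure X} {p : ℝ≥0∞}

lemma memℒp_mul (g : Lp ℂ ⊤ μ) (f : Lp ℂ p μ) : MemLp (⇑g * ⇑f) p μ :=
  ((MemLp.smul (r := p) (Lp.memLp f) (Lp.memLp g)) : MemLp (⇑g • ⇑f) p μ)

lemma eLpNorm_mul_le (g : X → ℂ) {f : X → ℂ} (hf : AEStronglyMeasurable f μ) :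
    eLpNorm (g * f) p μ ≤ eLpNorm g ⊤ μ * eLpNorm f p μ :=
  eLpNorm_smul_le_eLpNorm_top_mul_eLpNorm p hf g

/-- The multiplication operator `M_g` on `L^p`. -/
noncomputable def mulOp (p : ℝ≥0∞) [Fact (1 ≤ p)] (g : Lp ℂ ⊤ μ) :
    Lp ℂ p μ →L[ℂ] Lp ℂ p μ :=
  LinearMap.mkContinuous
    { toFun := fun f => (memℒp_mul g f).toLp (⇑g * ⇑f)
      map_add' := fun f₁ f₂ => Lp.ext <| by
        filter_upwards [MemLp.coeFn_toLp (memℒp_mul g (f₁ + f₂)),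
          MemLp.coeFn_toLp (memℒp_mul g f₁), MemLp.coeFn_toLp (memℒp_mul g f₂),
          Lp.coeFn_add f₁ f₂,
          Lp.coeFn_add ((memℒp_mul g f₁).toLp (⇑g * ⇑f₁)) ((memℒp_mul g f₂).toLp (⇑g * ⇑f₂))]
          with x h1 h2 h3 h4 h5
        simp only [Pi.mul_apply, Pi.add_apply] at *
        rw [h1, h5, h4, h2, h3]; ring
      map_smul' := fun c f => Lp.ext <| by
        filter_upwards [MemLp.coeFn_toLp (memℒp_mul g (c • f)),
          MemLp.coeFn_toLp (memℒp_mul g f), Lp.coeFn_smul c f,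
          Lp.coeFn_smul c ((memℒp_mul g f).toLp (⇑g * ⇑f))] with x h1 h2 h3 h4
        simp only [Pi.mul_apply, Pi.smul_apply, smul_eq_mul, RingHom.id_apply] at *
        rw [h1, h4, h2, h3]; ring }
    ‖g‖ (fun f => by
      show ‖(memℒp_mul g f).toLp (⇑g * ⇑f)‖ ≤ ‖g‖ * ‖f‖
      rw [Lp.norm_toLp (⇑g * ⇑f) (memℒp_mul g f), Lp.norm_def, Lp.norm_def, ← ENNReal.toReal_mul]
      exact ENNReal.toReal_mono
        (ENNReal.mul_ne_top (Lp.eLpNorm_ne_top g) (Lp.eLpNorm_ne_top f))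
        (eLpNorm_mul_le ⇑g (Lp.aestronglyMeasurable f)))

lemma mulOp_coeFn [Fact (1 ≤ p)] (g : Lp ℂ ⊤ μ) (f : Lp ℂ p μ) :
    ⇑(mulOp p g f) =ᵐ[μ] ⇑g * ⇑f :=
  MemLp.coeFn_toLp (memℒp_mul g f)

lemma norm_mulOp_le [Fact (1 ≤ p)] (g : Lp ℂ ⊤ μ) : ‖mulOp p g‖ ≤ ‖g‖ :=
  LinearMap.mkContinuous_norm_le _ (norm_nonneg g) _

lemma le_norm_mulOp [SigmaFinite μ] [Fact (1 ≤ p)] (hp : 1 ≤ p) (g : Lp ℂ ⊤ μ) :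
    ‖g‖ ≤ ‖mulOp p g‖ := by
  by_contra hlt
  push_neg at hlt
  obtain ⟨c, hc1, hc2⟩ := exists_between hlt
  have hc0 : 0 ≤ c := le_of_lt (lt_of_le_of_lt (norm_nonneg _) hc1)
  set S : Set X := {x | c < ‖(g : X → ℂ) x‖} with hS
  have hSmeas : MeasurableSet S :=
    measurableSet_lt measurable_const (Lp.stronglyMeasurable g).measurable.norm
  have hS0 : 0 < μ S := by
    rcases eq_zero_or_pos (μ S) with h0 | h0
    · exfalso
      have hb : ∀ᵐ x ∂μ, ‖(g : X → ℂ) x‖ ≤ c := by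
        rw [ae_iff]
        simpa [hS, not_le] using h0
      have : eLpNorm (⇑g) ⊤ μ ≤ ENNReal.ofReal c := by
        rw [eLpNorm_exponent_top]
        exact eLpNormEssSup_le_of_ae_bound hb
      have : ‖g‖ ≤ c := by
        rw [Lp.norm_def]
        calc (eLpNorm (⇑g) ⊤ μ).toReal ≤ (ENNReal.ofReal c).toReal :=
              ENNReal.toReal_mono ENNReal.ofReal_ne_top this
          _ = c := ENNReal.toReal_ofReal hc0
      linarith
    · exact h0
  obtain ⟨t, htm, hts, ht0, htfin⟩ := Measure.exists_subset_measure_lt_top hSmeas hS0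
  have hp0 : p ≠ 0 := by
    intro h; rw [h] at hp; exact absurd hp (by simp)
  -- the normalized indicator test function
  have hmem : MemLp (t.indicator fun _ => (1 : ℂ)) p μ :=
    memLp_indicator_const p htm 1 (Or.inr htfin.ne)
  set f : Lp ℂ p μ := hmem.toLp _ with hf
  have hnormf : ‖f‖ = (μ t ^ (1 / p.toReal)).toReal := by
    rw [hf, Lp.norm_toLp, eLpNorm_indicator_const' htm ht0.ne' hp0]
    simp
  have hμt : μ t ^ (1 / p.toReal) ≠ 0 :=
    (ENNReal.rpow_pos ht0 htfin.ne).ne'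
  have hμt' : μ t ^ (1 / p.toReal) ≠ ⊤ :=
    ENNReal.rpow_ne_top_of_nonneg (by positivity) htfin.ne
  have hfpos : 0 < ‖f‖ := by
    rw [hnormf]
    exact ENNReal.toReal_pos hμt hμt'
  -- lower bound on ‖mulOp p g f‖
  have hlow : c * ‖f‖ ≤ ‖mulOp p g f‖ := by
    have hmono : eLpNorm (t.indicator fun _ => c) p μ ≤ eLpNorm (⇑(mulOp p g f)) p μ := by
      refine eLpNorm_mono_ae ?_
      filter_upwards [mulOp_coeFn g f, MemLp.coeFn_toLp hmem] with x h1 h2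
      rw [h1, Pi.mul_apply, h2]
      by_cases hx : x ∈ t
      · have hcx : c < ‖(g : X → ℂ) x‖ := hts hx
        simp only [Set.indicator_of_mem hx, mul_one, norm_mul, norm_one]
        calc ‖c‖ = c := by rw [Real.norm_of_nonneg hc0]
          _ ≤ ‖(g : X → ℂ) x‖ := hcx.le
          _ = ‖(g : X → ℂ) x‖ * 1 := by ring
          _ = _ := by norm_num
      · simp [Set.indicator_of_notMem hx]
    have hval : eLpNorm (t.indicator fun _ => c) p μ
        = ENNReal.ofReal c * μ t ^ (1 / p.toReal) := by
      rw [eLpNorm_indicator_const' htm ht0.ne' hp0, Real.enorm_eq_ofReal hc0]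
    rw [hnormf, Lp.norm_def]
    calc c * (μ t ^ (1 / p.toReal)).toReal
        = (ENNReal.ofReal c * μ t ^ (1 / p.toReal)).toReal := by
          rw [ENNReal.toReal_mul, ENNReal.toReal_ofReal hc0]
      _ ≤ (eLpNorm (⇑(mulOp p g f)) p μ).toReal := by
          refine ENNReal.toReal_mono (Lp.eLpNorm_ne_top _) ?_
          rw [← hval]; exact hmono
  have hup : ‖mulOp p g f‖ ≤ ‖mulOp p g‖ * ‖f‖ := (mulOp p g).le_opNorm f
  nlinarith [hfpos, hc2, hlow, hup]

lemma norm_mulOp [SigmaFinite μ] [Fact (1 ≤ p)] (hp : 1 ≤ p) (g : Lp ℂ ⊤ μ) :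
    ‖mulOp p g‖ = ‖g‖ :=
  le_antisymm (norm_mulOp_le g) (le_norm_mulOp hp g)

end TDZAux

open TDZAux Set in
/-- For `h ∈ L^∞(μ)` over a σ-finite measure space and `1 ≤ p ≤ ∞`, the multiplication
operator `M_h : L^p(μ) → L^p(μ)`, `M_h f = h·f`, is a topological divisor of zero in the
Banach algebra `B(L^p(μ))` if and only if `h` is a topological divisor of zero in `L^∞(μ)`. -/
theorem multiplication_op_tdz_iff {X : Type*} [MeasurableSpace X] (μ : Measure X)
    [SigmaFinite μ] (p : ℝ≥0∞) [Fact (1 ≤ p)] (h : Lp ℂ ⊤ μ)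
    (M : Lp ℂ p μ →L[ℂ] Lp ℂ p μ)
    (hM : ∀ f : Lp ℂ p μ, (⇑(M f) : X → ℂ) =ᵐ[μ] ⇑h * ⇑f) :
    IsTDZ M ↔ IsTDZLinfty μ h := by
  have hp : (1 : ℝ≥0∞) ≤ p := Fact.out
  constructor
  · rintro ⟨y, hy1, hy⟩
    set E : ℕ → Set X := fun n => {x | ‖(h : X → ℂ) x‖ < 1 / ((n : ℝ) + 1)} with hE
    have hEmeas : ∀ n, MeasurableSet (E n) := fun n =>
      measurableSet_lt (Lp.stronglyMeasurable h).measurable.norm measurable_const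
    have claim : ∀ n : ℕ, μ (E n) ≠ 0 := by
      intro n hn0
      have hεpos : 0 < 1 / ((n : ℝ) + 1) := by positivity
      have hb : ∀ᵐ x ∂μ, 1 / ((n : ℝ) + 1) ≤ ‖(h : X → ℂ) x‖ := by
        rw [ae_iff]
        simpa [hE, not_le] using hn0
      rcases hy with hyl | hyr
      · -- left case : ‖M f‖ ≥ ε ‖f‖
        have hMf : ∀ f : Lp ℂ p μ, 1 / ((n : ℝ) + 1) * ‖f‖ ≤ ‖M f‖ := by
          intro f
          have h1 : eLpNorm ((1 / ((n : ℝ) + 1)) • ⇑f) p μ ≤ eLpNorm (⇑(M f)) p μ := by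
            rw [eLpNorm_congr_ae (hM f)]
            refine eLpNorm_mono_ae ?_
            filter_upwards [hb] with x hx
            rw [Pi.smul_apply, Pi.mul_apply, norm_smul, norm_mul]
            have : ‖(1 / ((n : ℝ) + 1) : ℝ)‖ = 1 / ((n : ℝ) + 1) :=
              Real.norm_of_nonneg hεpos.le
            rw [this]
            exact mul_le_mul_of_nonneg_right hx (norm_nonneg _)
          rw [eLpNorm_const_smul, Real.enorm_eq_ofReal hεpos.le] at h1
          have h3 := ENNReal.toReal_mono (Lp.eLpNorm_ne_top (M f)) h1
          rw [ENNReal.toReal_mul, ENNReal.toReal_ofReal hεpos.le] at h3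
          rw [Lp.norm_def, Lp.norm_def]
          exact h3
        have hres : ∀ m, 1 / ((n : ℝ) + 1) ≤ ‖M * y m‖ := by
          intro m
          have hbnd : ‖y m‖ ≤ ‖M * y m‖ / (1 / ((n : ℝ) + 1)) := by
            refine ContinuousLinearMap.opNorm_le_bound _ (by positivity) ?_
            intro f
            have h4 : 1 / ((n : ℝ) + 1) * ‖y m f‖ ≤ ‖M (y m f)‖ := hMf (y m f)
            have h5 : ‖M (y m f)‖ ≤ ‖M * y m‖ * ‖f‖ := by
              have := (M * y m).le_opNorm f
              rwa [ContinuousLinearMap.mul_apply] at this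
            rw [div_mul_eq_mul_div, le_div_iff₀ hεpos]
            nlinarith [norm_nonneg (y m f)]
          rw [hy1 m, le_div_iff₀ hεpos, one_mul] at hbnd
          linarith
        have := ge_of_tendsto hyl (Eventually.of_forall hres)
        linarith
      · -- right case : build an explicit right inverse of M
        set k : X → ℂ := fun x => ((h : X → ℂ) x)⁻¹ with hk
        have hkmeas : AEStronglyMeasurable k μ :=
          ((Lp.stronglyMeasurable h).measurable.inv.stronglyMeasurable).aestronglyMeasurable
        have hkmem : MemLp k ⊤ μ := by
          refine memLp_top_of_bound hkmeas (1 / (1 / ((n : ℝ) + 1))) ?_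
          filter_upwards [hb] with x hx
          simp only [hk, norm_inv, one_div, inv_inv]
          have h6 := inv_anti₀ hεpos hx
          rwa [one_div, inv_inv] at h6
        set N := mulOp p (hkmem.toLp k) with hN
        have hMN : M * N = 1 := by
          ext f
          rw [ContinuousLinearMap.mul_apply, ContinuousLinearMap.one_apply]
          filter_upwards [hM (N f), mulOp_coeFn (hkmem.toLp k) f, hkmem.coeFn_toLp, hb]
            with x e1 e2 e3 e4
          simp only [Pi.mul_apply] at e1 e2
          rw [e1, e2, e3]
          have hx0 : (h : X → ℂ) x ≠ 0 := by
            intro h0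
            rw [h0, norm_zero] at e4
            linarith
          simp only [hk]
          field_simp
        have hcontr : ∀ m, (1 : ℝ) ≤ ‖y m * M‖ * ‖N‖ := by
          intro m
          have hid : y m = y m * M * N := by rw [mul_assoc, hMN, mul_one]
          calc (1 : ℝ) = ‖y m‖ := (hy1 m).symm
            _ = ‖y m * M * N‖ := by rw [← hid]
            _ ≤ ‖y m * M‖ * ‖N‖ := norm_mul_le _ _
        have htend : Tendsto (fun m => ‖y m * M‖ * ‖N‖) atTop (nhds 0) := by
          simpa using hyr.mul_const ‖N‖
        have := ge_of_tendsto htend (Eventually.of_forall hcontr)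
        linarith
    -- now build the witnesses in L∞
    have hgmem : ∀ n, MemLp ((E n).indicator fun _ => (1 : ℂ)) ⊤ μ := fun n => by
      refine memLp_top_of_bound
        ((stronglyMeasurable_const.indicator (hEmeas n)).aestronglyMeasurable) 1
        (Eventually.of_forall fun x => ?_)
      by_cases hx : x ∈ E n <;> simp [hx]
    refine ⟨fun n => (hgmem n).toLp _, fun n => ?_, Or.inl ?_⟩
    · rw [Lp.norm_toLp, eLpNorm_indicator_const' (hEmeas n) (claim n) (by simp)]
      simp
    · refine squeeze_zero (fun n => ENNReal.toReal_nonneg) (fun n => ?_)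
        tendsto_one_div_add_atTop_nhds_zero_nat
      have hbound : eLpNorm (⇑h * ⇑((hgmem n).toLp _) : X → ℂ) ⊤ μ
          ≤ ENNReal.ofReal (1 / ((n : ℝ) + 1)) := by
        rw [eLpNorm_exponent_top]
        refine eLpNormEssSup_le_of_ae_bound ?_
        filter_upwards [(hgmem n).coeFn_toLp] with x e
        rw [Pi.mul_apply, e]
        by_cases hx : x ∈ E n
        · rw [indicator_of_mem hx, mul_one]
          exact le_of_lt hx
        · rw [indicator_of_notMem hx, mul_zero, norm_zero]
          positivity
      calc (eLpNorm (⇑h * ⇑((hgmem n).toLp _) : X → ℂ) ⊤ μ).toReal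
          ≤ (ENNReal.ofReal (1 / ((n : ℝ) + 1))).toReal :=
            ENNReal.toReal_mono ENNReal.ofReal_ne_top hbound
        _ = 1 / ((n : ℝ) + 1) := ENNReal.toReal_ofReal (by positivity)
  · rintro ⟨g, hg1, hg⟩
    have hg' : Tendsto (fun n => (eLpNorm (⇑h * ⇑(g n) : X → ℂ) ⊤ μ).toReal) atTop (nhds 0) := by
      rcases hg with hgl | hgr
      · exact hgl
      · have hcomm : ∀ n, eLpNorm (⇑(g n) * ⇑h : X → ℂ) ⊤ μ
            = eLpNorm (⇑h * ⇑(g n) : X → ℂ) ⊤ μ := fun n => by rw [mul_comm]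
        simpa only [hcomm] using hgr
    refine ⟨fun n => mulOp p (g n), fun n => by rw [norm_mulOp hp]; exact hg1 n, Or.inl ?_⟩
    refine squeeze_zero (fun n => norm_nonneg _) (fun n => ?_) hg'
    refine ContinuousLinearMap.opNorm_le_bound _ ENNReal.toReal_nonneg ?_
    intro f
    have e1 : ⇑((M * mulOp p (g n)) f) =ᵐ[μ] (⇑h * ⇑(g n)) * ⇑f := by
      rw [ContinuousLinearMap.mul_apply]
      filter_upwards [hM (mulOp p (g n) f), mulOp_coeFn (g n) f] with x a1 a2
      simp only [Pi.mul_apply] at a1 a2 ⊢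
      rw [a1, a2]
      ring
    rw [Lp.norm_def, eLpNorm_congr_ae e1, Lp.norm_def, ← ENNReal.toReal_mul]
    refine ENNReal.toReal_mono ?_ (eLpNorm_mul_le _ (Lp.aestronglyMeasurable f))
    exact ENNReal.mul_ne_top (memℒp_mul (p := ⊤) h (g n)).2.ne (Lp.eLpNorm_ne_top f)
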